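/- Let p be an even positive integer and let G be a graph of order p+2 not containing B_p with exactly p(p+2)/2 edges. Then G is isomorphic either to K_{p+2} minus a perfect matching, or to the complement of the disjoint union K_1 + ((p−2)/2)K_2 + P_3. -/

import Mathlib

open SimpleGraph

/-- A graph contains the book `B_p` iff some edge has at least `p` common neighbors. -/
def SimpleGraph.ContainsBook {V : Type*} (G : SimpleGraph V) (p : ℕ) : Prop :=
  ∃ x y, G.Adj x y ∧ p ≤ (G.commonNeighbors x y).ncard

/-- The Turán number `ex(n, B_p)`: the maximum number of edges of a simple graph
on `n` vertices containing no book `B_p`. -/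
noncomputable def bookTuranNumber (n p : ℕ) : ℕ :=
  sSup {e : ℕ | ∃ G : SimpleGraph (Fin n), ¬ G.ContainsBook p ∧ G.edgeSet.ncard = e}

/-- The disjoint union of `m` copies of the complete graph `K_k`. -/
def unionComplete (m k : ℕ) : SimpleGraph (Fin m × Fin k) :=
  SimpleGraph.fromRel fun a b => a.1 = b.1

/-- The join `G ∨ H` of two graphs. -/
def SimpleGraph.join {α β : Type*} (G : SimpleGraph α) (H : SimpleGraph β) :
    SimpleGraph (α ⊕ β) := (Gᶜ ⊕g Hᶜ)ᶜ

/-- A disjoint union of cycles `C_{i 0} + ⋯ + C_{i (t-1)}`. -/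
def cycleFamily (t : ℕ) (i : Fin t → ℕ) : SimpleGraph (Σ j : Fin t, Fin (i j)) :=
  SimpleGraph.fromRel fun a b => ∃ h : a.1 = b.1, (SimpleGraph.cycleGraph (i b.1)).Adj (h ▸ a.2) b.2


lemma involEquiv {V : Type*} [Fintype V] [DecidableEq V] (m : ℕ)
    (hcard : Fintype.card V = 2 * m) (f : V → V)
    (hinv : ∀ v, f (f v) = v) (hfix : ∀ v, f v ≠ v) :
    ∃ e : V ≃ Fin m × Fin 2, ∀ u v : V, ((e u).1 = (e v).1 ↔ (v = u ∨ v = f u)) := by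
  classical
  let s : Setoid V := ⟨fun x y => y = x ∨ y = f x, by
    constructor
    · exact fun x => Or.inl rfl
    · rintro x y (rfl | rfl)
      · exact Or.inl rfl
      · exact Or.inr (hinv x).symm
    · rintro x y z (rfl | rfl) (rfl | rfl)
      · exact Or.inl rfl
      · exact Or.inr rfl
      · exact Or.inr rfl
      · exact Or.inl (hinv x)⟩
  have hrel : ∀ x y : V, (s.r x y ↔ (y = x ∨ y = f x)) := fun _ _ => Iff.rfl
  let Q := Quotient s
  let g : Q × Fin 2 → V := fun q => if q.2 = 0 then q.1.out else f q.1.out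
  have hclass : ∀ q : Q, ∀ i : Fin 2, (⟦g (q, i)⟧ : Q) = q := by
    intro q i
    by_cases h : i = 0
    · simp only [g, h, if_pos rfl]
      exact q.out_eq
    · simp only [g, if_neg h]
      calc (⟦f q.out⟧ : Q) = ⟦q.out⟧ := (Quotient.sound (Or.inr rfl)).symm
        _ = q := q.out_eq
  have hgbij : Function.Bijective g := by
    constructor
    · rintro ⟨q, i⟩ ⟨q', i'⟩ h
      have hq : q = q' := by rw [← hclass q i, ← hclass q' i', h]
      subst hq
      fin_cases i <;> fin_cases i' <;> simp_all [g] <;>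
        first
        | rfl
        | exact absurd h.symm (hfix _)
        | exact absurd h (hfix _)
    · intro v
      have : s.r (⟦v⟧ : Q).out v := Quotient.exact ((⟦v⟧ : Q).out_eq)
      rcases this with h | h
      · exact ⟨(⟦v⟧, 0), h.symm⟩
      · exact ⟨(⟦v⟧, 1), by simpa [g] using h.symm⟩
  let E : Q × Fin 2 ≃ V := Equiv.ofBijective g hgbij
  have hE1 : ∀ v : V, (E.symm v).1 = (⟦v⟧ : Q) := by
    intro v
    conv_rhs => rw [← E.apply_symm_apply v]
    exact (hclass (E.symm v).1 (E.symm v).2).symm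
  have hcardQ : Fintype.card Q = m := by
    have := Fintype.card_congr E
    simp [Fintype.card_prod, hcard] at this
    omega
  let qe : Q ≃ Fin m := Fintype.equivFinOfCardEq hcardQ
  refine ⟨E.symm.trans (Equiv.prodCongr qe (Equiv.refl _)), fun u v => ?_⟩
  simp only [Equiv.trans_apply, Equiv.prodCongr_apply, Prod.map_fst]
  rw [qe.apply_eq_iff_eq, hE1, hE1, Quotient.eq]
  exact hrel u v

/-- A 1-regular graph on `2m` vertices is a perfect matching. -/
lemma oneRegularIso {V : Type*} [Fintype V] [DecidableEq V] (m : ℕ)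
    (hcard : Fintype.card V = 2 * m) (H : SimpleGraph V) [DecidableRel H.Adj]
    (h1 : ∀ v, H.degree v = 1) :
    Nonempty (H ≃g unionComplete m 2) := by
  classical
  have hsing : ∀ v, ∃ a, H.neighborFinset v = {a} := fun v =>
    Finset.card_eq_one.mp (h1 v)
  choose f hf using hsing
  have hAdj : ∀ u v, H.Adj u v ↔ v = f u := by
    intro u v
    rw [← mem_neighborFinset, hf u, Finset.mem_singleton]
  have hfadj : ∀ v, H.Adj v (f v) := fun v => (hAdj v (f v)).mpr rfl
  have hfix : ∀ v, f v ≠ v := fun v h => H.irrefl (h ▸ hfadj v)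
  have hinv : ∀ v, f (f v) = v := fun v =>
    ((hAdj (f v) v).mp (hfadj v).symm).symm
  obtain ⟨e, he⟩ := involEquiv m hcard f hinv hfix
  refine ⟨⟨e, ?_⟩⟩
  intro u v
  simp only [unionComplete, fromRel_adj, ne_eq, EmbeddingLike.apply_eq_iff_eq, or_self]
  rw [hAdj u v]
  constructor
  · rintro ⟨hne, h⟩
    have h' : (e u).1 = (e v).1 := by rcases h with h | h; exacts [h, h.symm]
    rcases (he u v).mp h' with rfl | rfl
    · exact absurd rfl hne
    · rfl
  · rintro rfl
    exact ⟨fun h => hfix u h.symm, Or.inl ((he u (f u)).mpr (Or.inr rfl))⟩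

/-- From an iso of the complement, an iso to the complement. -/
lemma complIso {V W : Type*} {A : SimpleGraph V} {B : SimpleGraph W} (e : Aᶜ ≃g B) :
    Nonempty (A ≃g Bᶜ) := by
  refine ⟨⟨e.toEquiv, ?_⟩⟩
  intro u v
  have h := e.map_rel_iff (a := u) (b := v)
  simp only [compl_adj] at *
  constructor
  · rintro ⟨hne, hnB⟩
    have hne' : u ≠ v := fun h' => hne (by rw [h'])
    by_contra hA
    exact hnB (h.mpr ⟨hne', hA⟩)
  · intro hA
    have hne : u ≠ v := A.ne_of_adj hA
    refine ⟨fun h' => hne (e.toEquiv.injective h'), fun hB => ?_⟩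
    exact (h.mp hB).2 hA

theorem stmt7 (p : ℕ) (hp : 1 ≤ p) (hev : Even p) {V : Type*} [Fintype V]
    (hV : Fintype.card V = p + 2) (G : SimpleGraph V) (hfree : ¬ G.ContainsBook p)
    (hsize : G.edgeSet.ncard = p * (p + 2) / 2) :
    Nonempty (G ≃g (unionComplete ((p + 2) / 2) 2)ᶜ) ∨
      Nonempty (G ≃g ((⊥ : SimpleGraph (Fin 1)) ⊕g
        (unionComplete ((p - 2) / 2) 2 ⊕g SimpleGraph.pathGraph 3))ᶜ) := by
  classical
  obtain ⟨k, hk⟩ := hev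
  have hp2 : 2 ≤ p := by omega
  letI : DecidableRel G.Adj := Classical.decRel _
  -- total degree
  have hedge : ∑ v, G.degree v = p * (p + 2) := by
    have h1 : G.edgeFinset.card = p * (p + 2) / 2 := by
      rw [← hsize, Set.ncard_eq_toFinset_card']
      exact congrArg Finset.card (Set.toFinset_congr rfl)
    have h2 : p * (p + 2) = 2 * (p * (p + 2) / 2) := by
      subst hk
      have h3 : (k + k) * (k + k + 2) = 2 * (k * (k + k + 2)) := by ring
      rw [h3, Nat.mul_div_cancel_left _ (by norm_num)]
    rw [G.sum_degrees_eq_twice_card_edges, h1, ← h2]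
  have hmax : ∀ v, G.degree v ≤ p + 1 := by
    intro v
    have := G.degree_lt_card_verts v
    omega
  -- a full-degree vertex is adjacent to everything else
  have hfull : ∀ x, G.degree x = p + 1 → G.neighborFinset x = Finset.univ.erase x := by
    intro x hx
    apply Finset.eq_of_subset_of_card_le
    · intro z hz
      rw [mem_neighborFinset] at hz
      exact Finset.mem_erase.mpr ⟨(G.ne_of_adj hz).symm, Finset.mem_univ z⟩
    · rw [Finset.card_erase_of_mem (Finset.mem_univ x), Finset.card_univ, hV,
        G.card_neighborFinset_eq_degree, hx]
      omega
  -- no two full-degree vertices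
  have hone : ∀ x y, x ≠ y → G.degree x = p + 1 → G.degree y = p + 1 → False := by
    intro x y hxy hx hy
    apply hfree
    have hxN := hfull x hx
    have hyN := hfull y hy
    have hadj : G.Adj x y := by
      rw [← mem_neighborFinset, hxN]
      exact Finset.mem_erase.mpr ⟨hxy.symm, Finset.mem_univ y⟩
    refine ⟨x, y, hadj, ?_⟩
    have hsub : (((Finset.univ.erase x).erase y : Finset V) : Set V) ⊆
        G.commonNeighbors x y := by
      intro z hz
      rw [Finset.mem_coe, Finset.mem_erase, Finset.mem_erase] at hz
      obtain ⟨hzy, hzx, -⟩ := hz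
      rw [mem_commonNeighbors]
      constructor
      · rw [← mem_neighborFinset, hxN]
        exact Finset.mem_erase.mpr ⟨hzx, Finset.mem_univ z⟩
      · rw [← mem_neighborFinset, hyN]
        exact Finset.mem_erase.mpr ⟨hzy, Finset.mem_univ z⟩
    have hcard : (((Finset.univ.erase x).erase y : Finset V) : Set V).ncard = p := by
      rw [Set.ncard_coe_finset,
        Finset.card_erase_of_mem (Finset.mem_erase.mpr ⟨hxy.symm, Finset.mem_univ y⟩),
        Finset.card_erase_of_mem (Finset.mem_univ x), Finset.card_univ, hV]
      omega
    calc p = (((Finset.univ.erase x).erase y : Finset V) : Set V).ncard := hcard.symm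
      _ ≤ (G.commonNeighbors x y).ncard := Set.ncard_le_ncard hsub (Set.toFinite _)
  by_cases hex : ∃ v, G.degree v = p + 1
  · -- Case 2: exactly one full-degree vertex
    right
    obtain ⟨v₀, hv₀⟩ := hex
    have hothers : ∀ w, w ≠ v₀ → G.degree w ≤ p := by
      intro w hw
      by_contra hc
      exact hone w v₀ hw (by have := hmax w; omega) hv₀
    have hsum_s : G.degree v₀ + ∑ w ∈ Finset.univ.erase v₀, G.degree w = p * (p + 2) := by
      rw [← hedge]
      exact Finset.add_sum_erase Finset.univ (fun w => G.degree w) (Finset.mem_univ v₀)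
    have hcard_s : (Finset.univ.erase v₀).card = p + 1 := by
      rw [Finset.card_erase_of_mem (Finset.mem_univ v₀), Finset.card_univ, hV]
      omega
    have hdef : ∑ w ∈ Finset.univ.erase v₀, (p - G.degree w) = 1 := by
      have h1 : ∀ w ∈ Finset.univ.erase v₀, (p - G.degree w) + G.degree w = p := by
        intro w hw
        have := hothers w (Finset.mem_erase.mp hw).1
        omega
      have h2 : ∑ w ∈ Finset.univ.erase v₀, (p - G.degree w)
          + ∑ w ∈ Finset.univ.erase v₀, G.degree w = (p + 1) * p := by
        rw [← Finset.sum_add_distrib, Finset.sum_congr rfl h1, Finset.sum_const, hcard_s,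
          smul_eq_mul]
      have hmc : p * (p + 2) = (p + 1) * p + p := by ring
      omega
    have hexu : ∃ u ∈ Finset.univ.erase v₀, p - G.degree u ≠ 0 := by
      by_contra hc
      push_neg at hc
      rw [Finset.sum_eq_zero hc] at hdef
      omega
    obtain ⟨u, hus, hu1⟩ := hexu
    have huv₀ : u ≠ v₀ := (Finset.mem_erase.mp hus).1
    have hsplit : (p - G.degree u)
        + ∑ w ∈ (Finset.univ.erase v₀).erase u, (p - G.degree w) = 1 := by
      rw [← hdef]
      exact Finset.add_sum_erase _ (fun w => p - G.degree w) hus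
    have hdu : G.degree u = p - 1 := by
      have := hothers u huv₀
      omega
    have h0 : ∑ w ∈ (Finset.univ.erase v₀).erase u, (p - G.degree w) = 0 := by omega
    have hw1 : ∀ w, w ≠ v₀ → w ≠ u → G.degree w = p := by
      intro w hwv hwu
      have hmem : w ∈ (Finset.univ.erase v₀).erase u :=
        Finset.mem_erase.mpr ⟨hwu, Finset.mem_erase.mpr ⟨hwv, Finset.mem_univ w⟩⟩
      have := Finset.sum_eq_zero_iff.mp h0 w hmem
      have := hothers w hwv
      omega
    letI : DecidableRel (Gᶜ).Adj := Classical.decRel _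
    have hHdeg : ∀ w, (Gᶜ).degree w = p + 1 - G.degree w := fun w => by
      rw [degree_compl, hV]
      omega
    have hHv₀ : (Gᶜ).degree v₀ = 0 := by rw [hHdeg, hv₀]; omega
    have hHu : (Gᶜ).degree u = 2 := by rw [hHdeg, hdu]; omega
    have hHw : ∀ w, w ≠ v₀ → w ≠ u → (Gᶜ).degree w = 1 := fun w h1 h2 => by
      rw [hHdeg, hw1 w h1 h2]; omega
    have hnov₀ : ∀ z, ¬(Gᶜ).Adj v₀ z := by
      intro z hz
      have hmem : z ∈ (Gᶜ).neighborFinset v₀ := (mem_neighborFinset _ _ _).mpr hz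
      rw [Finset.card_eq_zero.mp hHv₀] at hmem
      exact absurd hmem (Finset.notMem_empty z)
    obtain ⟨a, b, hab, hNu⟩ := Finset.card_eq_two.mp hHu
    have hadj_u : ∀ z, (Gᶜ).Adj u z ↔ z = a ∨ z = b := fun z => by
      rw [← mem_neighborFinset, hNu]
      simp
    have hua : (Gᶜ).Adj u a := (hadj_u a).mpr (Or.inl rfl)
    have hub : (Gᶜ).Adj u b := (hadj_u b).mpr (Or.inr rfl)
    have hau : a ≠ u := fun h => (Gᶜ).irrefl (h ▸ hua)
    have hbu : b ≠ u := fun h => (Gᶜ).irrefl (h ▸ hub)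
    have hav : a ≠ v₀ := fun h => hnov₀ u (h ▸ hua.symm)
    have hbv : b ≠ v₀ := fun h => hnov₀ u (h ▸ hub.symm)
    have ha1 : (Gᶜ).degree a = 1 := hHw a hav hau
    have hb1 : (Gᶜ).degree b = 1 := hHw b hbv hbu
    have hNa : (Gᶜ).neighborFinset a = {u} := by
      obtain ⟨c, hc⟩ := Finset.card_eq_one.mp ha1
      have hmem : u ∈ (Gᶜ).neighborFinset a := (mem_neighborFinset _ _ _).mpr hua.symm
      rw [hc] at hmem ⊢
      rw [Finset.mem_singleton] at hmem
      rw [hmem]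
    have hNb : (Gᶜ).neighborFinset b = {u} := by
      obtain ⟨c, hc⟩ := Finset.card_eq_one.mp hb1
      have hmem : u ∈ (Gᶜ).neighborFinset b := (mem_neighborFinset _ _ _).mpr hub.symm
      rw [hc] at hmem ⊢
      rw [Finset.mem_singleton] at hmem
      rw [hmem]
    have hadj_a : ∀ z, (Gᶜ).Adj a z ↔ z = u := fun z => by
      rw [← mem_neighborFinset, hNa, Finset.mem_singleton]
    have hadj_b : ∀ z, (Gᶜ).Adj b z ↔ z = u := fun z => by
      rw [← mem_neighborFinset, hNb, Finset.mem_singleton]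
    -- the remaining vertices
    have hTcard : Fintype.card {w : V // w ≠ v₀ ∧ w ≠ u ∧ w ≠ a ∧ w ≠ b} = p - 2 := by
      rw [Fintype.card_subtype]
      have hfe : Finset.univ.filter (fun w : V => w ≠ v₀ ∧ w ≠ u ∧ w ≠ a ∧ w ≠ b)
          = Finset.univ \ {v₀, u, a, b} := by
        ext w
        simp only [Finset.mem_filter, Finset.mem_univ, true_and, Finset.mem_sdiff,
          Finset.mem_insert, Finset.mem_singleton]
        tauto
      have h4 : ({v₀, u, a, b} : Finset V).card = 4 := by
        rw [Finset.card_insert_of_notMem (by simp [Ne.symm huv₀, Ne.symm hav, Ne.symm hbv]),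
          Finset.card_insert_of_notMem (by simp [Ne.symm hau, Ne.symm hbu]),
          Finset.card_insert_of_notMem (by simp [hab]), Finset.card_singleton]
      rw [hfe, Finset.card_sdiff_of_subset (Finset.subset_univ _), Finset.card_univ, hV, h4]
      omega
    have hsingT : ∀ w : {w : V // w ≠ v₀ ∧ w ≠ u ∧ w ≠ a ∧ w ≠ b},
        ∃ c : {w : V // w ≠ v₀ ∧ w ≠ u ∧ w ≠ a ∧ w ≠ b},
          (Gᶜ).neighborFinset ↑w = {↑c} := by
      rintro ⟨w, hwv, hwu, hwa, hwb⟩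
      obtain ⟨c, hc⟩ := Finset.card_eq_one.mp (hHw w hwv hwu)
      have hwc : (Gᶜ).Adj w c := by
        rw [← mem_neighborFinset, hc]
        exact Finset.mem_singleton_self c
      have hcv : c ≠ v₀ := fun h => hnov₀ w (h ▸ hwc.symm)
      have hcu : c ≠ u := by
        rintro rfl
        rcases (hadj_u w).mp hwc.symm with rfl | rfl
        · exact hwa rfl
        · exact hwb rfl
      have hca : c ≠ a := by
        rintro rfl
        exact hwu ((hadj_a w).mp hwc.symm)
      have hcb : c ≠ b := by
        rintro rfl
        exact hwu ((hadj_b w).mp hwc.symm)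
      exact ⟨⟨c, hcv, hcu, hca, hcb⟩, hc⟩
    choose fR hfR using hsingT
    have hadjR : ∀ (w : {w : V // w ≠ v₀ ∧ w ≠ u ∧ w ≠ a ∧ w ≠ b}) (z : V),
        (Gᶜ).Adj ↑w z ↔ z = ↑(fR w) := fun w z => by
      rw [← mem_neighborFinset, hfR w, Finset.mem_singleton]
    have hfadjR : ∀ w : {w : V // w ≠ v₀ ∧ w ≠ u ∧ w ≠ a ∧ w ≠ b},
        (Gᶜ).Adj ↑w ↑(fR w) := fun w => (hadjR w _).mpr rfl
    have hfixR : ∀ w : {w : V // w ≠ v₀ ∧ w ≠ u ∧ w ≠ a ∧ w ≠ b},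
        fR w ≠ w := fun w h => (Gᶜ).irrefl (by
      have hthis := hfadjR w
      rw [h] at hthis
      exact hthis)
    have hinvR : ∀ w : {w : V // w ≠ v₀ ∧ w ≠ u ∧ w ≠ a ∧ w ≠ b},
        fR (fR w) = w := fun w => by
      have h2 := (hadjR (fR w) ↑w).mp (hfadjR w).symm
      exact (Subtype.coe_injective h2).symm
    have hTm : Fintype.card {w : V // w ≠ v₀ ∧ w ≠ u ∧ w ≠ a ∧ w ≠ b}
        = 2 * ((p - 2) / 2) := by rw [hTcard]; omega
    obtain ⟨eR, heR⟩ := involEquiv ((p - 2) / 2) hTm fR hinvR hfixR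
    -- build the isomorphism
    set ψ : V → Fin 1 ⊕ ((Fin ((p - 2) / 2) × Fin 2) ⊕ Fin 3) := fun w =>
      if hv : w = v₀ then Sum.inl 0
      else if ha' : w = a then Sum.inr (Sum.inr 0)
      else if hu' : w = u then Sum.inr (Sum.inr 1)
      else if hb' : w = b then Sum.inr (Sum.inr 2)
      else Sum.inr (Sum.inl (eR ⟨w, hv, hu', ha', hb'⟩)) with hψdef
    set χ : Fin 1 ⊕ ((Fin ((p - 2) / 2) × Fin 2) ⊕ Fin 3) → V :=
      Sum.elim (fun _ => v₀) (Sum.elim (fun y => ↑(eR.symm y))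
        (fun i => if i = 0 then a else if i = 1 then u else b)) with hχdef
    have hψv₀ : ψ v₀ = Sum.inl 0 := by simp [hψdef]
    have hψa : ψ a = Sum.inr (Sum.inr 0) := by simp [hψdef, hav]
    have hψu : ψ u = Sum.inr (Sum.inr 1) := by simp [hψdef, huv₀, Ne.symm hau]
    have hψb : ψ b = Sum.inr (Sum.inr 2) := by simp [hψdef, hbv, Ne.symm hab, hbu]
    have hψT : ∀ w : {w : V // w ≠ v₀ ∧ w ≠ u ∧ w ≠ a ∧ w ≠ b},
        ψ ↑w = Sum.inr (Sum.inl (eR w)) := by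
      rintro ⟨w, h1, h2, h3, h4⟩
      simp [hψdef, h1, h2, h3, h4]
    have hli : Function.LeftInverse χ ψ := by
      intro w
      by_cases h1 : w = v₀
      · subst h1; rw [hψv₀]; rfl
      by_cases h3 : w = a
      · subst h3; rw [hψa]; rfl
      by_cases h2 : w = u
      · subst h2; rw [hψu]; rfl
      by_cases h4 : w = b
      · subst h4; rw [hψb]; rfl
      · rw [hψT ⟨w, h1, h2, h3, h4⟩]
        simp [hχdef]
    have hri : Function.RightInverse χ ψ := by
      rintro (i | (y | i))
      · have : i = 0 := Subsingleton.elim _ _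
        subst this
        simpa [hχdef] using hψv₀
      · have := hψT (eR.symm y)
        simp only [hχdef, Sum.elim_inr, Sum.elim_inl]
        rw [this, Equiv.apply_symm_apply]
      · fin_cases i
        · simpa [hχdef] using hψa
        · simpa [hχdef] using hψu
        · simpa [hχdef] using hψb
    have hregion : ∀ w : V, w = v₀ ∨ w = a ∨ w = u ∨ w = b ∨
        ∃ t : {w : V // w ≠ v₀ ∧ w ≠ u ∧ w ≠ a ∧ w ≠ b}, w = ↑t := by
      intro w
      by_cases h1 : w = v₀
      · exact Or.inl h1
      by_cases h3 : w = a
      · exact Or.inr (Or.inl h3)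
      by_cases h2 : w = u
      · exact Or.inr (Or.inr (Or.inl h2))
      by_cases h4 : w = b
      · exact Or.inr (Or.inr (Or.inr (Or.inl h4)))
      · exact Or.inr (Or.inr (Or.inr (Or.inr ⟨⟨w, h1, h2, h3, h4⟩, rfl⟩)))
    have hiso : Nonempty ((Gᶜ) ≃g ((⊥ : SimpleGraph (Fin 1)) ⊕g
        (unionComplete ((p - 2) / 2) 2 ⊕g SimpleGraph.pathGraph 3))) := by
      refine ⟨⟨⟨ψ, χ, hli, hri⟩, ?_⟩⟩
      intro x y
      simp only [Equiv.coe_fn_mk]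
      rcases hregion x with rfl | rfl | rfl | rfl | ⟨s, rfl⟩ <;>
        rcases hregion y with rfl | rfl | rfl | rfl | ⟨t, rfl⟩ <;>
        simp only [hψv₀, hψa, hψu, hψb, hψT]
      · exact iff_of_false (by simp) (hnov₀ _)
      · exact iff_of_false (by simp) (hnov₀ _)
      · exact iff_of_false (by simp) (hnov₀ _)
      · exact iff_of_false (by simp) (hnov₀ _)
      · exact iff_of_false (by simp) (hnov₀ _)
      · exact iff_of_false (by simp) (fun h => hnov₀ _ h.symm)
      · exact iff_of_false (by simp [pathGraph_adj]) ((Gᶜ).irrefl)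
      · exact iff_of_true (by simp [pathGraph_adj]) hua.symm
      · exact iff_of_false (by simp [pathGraph_adj])
          (fun h => hbu ((hadj_a _).mp h))
      · exact iff_of_false (by simp) (fun h => t.2.2.1 ((hadj_a ↑t).mp h))
      · exact iff_of_false (by simp) (fun h => hnov₀ _ h.symm)
      · exact iff_of_true (by simp [pathGraph_adj]) hua
      · exact iff_of_false (by simp [pathGraph_adj]) ((Gᶜ).irrefl)
      · exact iff_of_true (by simp [pathGraph_adj]) hub
      · refine iff_of_false (by simp) (fun h => ?_)
        rcases (hadj_u ↑t).mp h with h' | h'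
        · exact t.2.2.2.1 h'
        · exact t.2.2.2.2 h'
      · exact iff_of_false (by simp) (fun h => hnov₀ _ h.symm)
      · exact iff_of_false (by simp [pathGraph_adj])
          (fun h => hau ((hadj_b _).mp h))
      · exact iff_of_true (by simp [pathGraph_adj]) hub.symm
      · exact iff_of_false (by simp [pathGraph_adj]) ((Gᶜ).irrefl)
      · exact iff_of_false (by simp) (fun h => t.2.2.1 ((hadj_b ↑t).mp h))
      · exact iff_of_false (by simp) (fun h => hnov₀ _ h.symm)
      · exact iff_of_false (by simp)
          (fun h => (fR s).2.2.2.1 ((hadjR s _).mp h).symm)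
      · exact iff_of_false (by simp)
          (fun h => (fR s).2.2.1 ((hadjR s _).mp h).symm)
      · exact iff_of_false (by simp)
          (fun h => (fR s).2.2.2.2 ((hadjR s _).mp h).symm)
      · -- both in the matching part
        rw [hadjR s ↑t]
        constructor
        · intro hAdjLHS
          have hA : (unionComplete ((p - 2) / 2) 2).Adj (eR s) (eR t) := by
            simpa using hAdjLHS
          rw [unionComplete, fromRel_adj] at hA
          obtain ⟨hne, hor⟩ := hA
          have h' : (eR s).1 = (eR t).1 := by
            rcases hor with h | h
            exacts [h, h.symm]
          rcases (heR s t).mp h' with rfl | rfl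
          · exact absurd rfl hne
          · rfl
        · intro h
          have ht : t = fR s := Subtype.coe_injective h
          subst ht
          have hA : (unionComplete ((p - 2) / 2) 2).Adj (eR s) (eR (fR s)) := by
            rw [unionComplete, fromRel_adj]
            refine ⟨fun hc => hfixR s (eR.injective hc).symm, Or.inl ?_⟩
            exact (heR s (fR s)).mpr (Or.inr rfl)
          simpa using hA
    obtain ⟨iso⟩ := hiso
    exact complIso iso
  · -- Case 1: G is p-regular
    left
    push_neg at hex
    have hle : ∀ v : V, G.degree v ≤ p := fun v => by
      have := hmax v; have := hex v; omega
    have hreg : ∀ v, G.degree v = p := by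
      by_contra hc
      push_neg at hc
      obtain ⟨w, hw⟩ := hc
      have hlt : G.degree w < p := lt_of_le_of_ne (hle w) hw
      have : ∑ v, G.degree v < ∑ _v : V, p :=
        Finset.sum_lt_sum (fun i _ => hle i) ⟨w, Finset.mem_univ w, hlt⟩
      rw [hedge, Finset.sum_const, Finset.card_univ, hV, smul_eq_mul] at this
      have hmc : p * (p + 2) = (p + 2) * p := Nat.mul_comm _ _
      omega
    letI : DecidableRel (Gᶜ).Adj := Classical.decRel _
    have h1 : ∀ v, (Gᶜ).degree v = 1 := by
      intro v
      rw [degree_compl, hreg v, hV]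
      omega
    have hm : Fintype.card V = 2 * ((p + 2) / 2) := by omega
    obtain ⟨iso⟩ := oneRegularIso ((p + 2) / 2) hm Gᶜ h1
    exact complIso iso
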